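/- Let 0 < λ < 1, set ν = 1 − λ, and let k, N be integers with k ≥ 0 and N ≥ k + 1. Define h_z(k,N,λ) := 1 for integers 0 ≤ z ≤ k, and h_z(k,N,λ) := [(N−z+1) B_{z,k}(ν) + z B_{z−1,k}(ν)]/(N+1) for integers k+1 ≤ z ≤ N+1. Then h_{N+1}(k,N,λ) = B_{N,k}(ν), and for every integer z with 0 ≤ z ≤ N+1 one has B_{N,k}(ν) ≤ h_z(k,N,λ) ≤ 1. -/

import Mathlib

/-- The binomial cumulative distribution function. -/
noncomputable def binomCDF (z k : ℕ) (p : ℝ) : ℝ :=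
  ∑ j ∈ Finset.range (k + 1), (z.choose j : ℝ) * p ^ j * (1 - p) ^ (z - j)

/-- The function `h_z(k, N, λ)` from the defensive QSV analysis, where `ν = 1 - λ`. -/
noncomputable def hFun (k N : ℕ) (l : ℝ) (z : ℕ) : ℝ :=
  if z ≤ k then 1
  else (((N : ℝ) - z + 1) * binomCDF z k (1 - l)
        + (z : ℝ) * binomCDF (z - 1) k (1 - l)) / ((N : ℝ) + 1)

variable {p : ℝ}

lemma term_nonneg (hp : 0 ≤ p) (hp1 : p ≤ 1) (z j : ℕ) :
    0 ≤ (z.choose j : ℝ) * p ^ j * (1 - p) ^ (z - j) := by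
  have h1 : (0:ℝ) ≤ 1 - p := by linarith
  positivity

lemma binomCDF_nonneg (hp : 0 ≤ p) (hp1 : p ≤ 1) (z k : ℕ) :
    0 ≤ binomCDF z k p :=
  Finset.sum_nonneg fun j _ => term_nonneg hp hp1 z j

lemma binomCDF_mono_k (hp : 0 ≤ p) (hp1 : p ≤ 1) (z : ℕ) {k k' : ℕ} (h : k ≤ k') :
    binomCDF z k p ≤ binomCDF z k' p :=
  Finset.sum_le_sum_of_subset_of_nonneg (Finset.range_subset_range.mpr (by omega))
    (fun j _ _ => term_nonneg hp hp1 z j)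

lemma binomCDF_full (hp : 0 ≤ p) (z : ℕ) : binomCDF z z p = 1 := by
  have h := add_pow p (1 - p) z
  simp only [add_sub_cancel, one_pow] at h
  rw [binomCDF]
  calc ∑ j ∈ Finset.range (z + 1), (z.choose j : ℝ) * p ^ j * (1 - p) ^ (z - j)
      = ∑ j ∈ Finset.range (z + 1), p ^ j * (1 - p) ^ (z - j) * (z.choose j : ℝ) :=
        Finset.sum_congr rfl fun j _ => by ring
    _ = 1 := h.symm

lemma binomCDF_le_one (hp : 0 ≤ p) (hp1 : p ≤ 1) (z k : ℕ) :
    binomCDF z k p ≤ 1 := by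
  by_cases h : k ≤ z
  · calc binomCDF z k p ≤ binomCDF z z p := binomCDF_mono_k hp hp1 z h
      _ = 1 := binomCDF_full hp z
  · rw [show binomCDF z k p = binomCDF z z p by
      rw [binomCDF, binomCDF,
        ← Finset.sum_subset (Finset.range_subset_range.mpr (by omega : z + 1 ≤ k + 1))]
      intro j hj hj2
      simp only [Finset.mem_range] at hj hj2
      have : z < j := by omega
      simp [Nat.choose_eq_zero_of_lt this]]
    exact le_of_eq (binomCDF_full hp z)

lemma binomCDF_zero (z : ℕ) : binomCDF z 0 p = (1 - p) ^ z := by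
  simp [binomCDF]

lemma binomCDF_succ (z k : ℕ) :
    binomCDF (z + 1) (k + 1) p
      = (1 - p) * binomCDF z (k + 1) p + p * binomCDF z k p := by
  have e1 : ∀ j, ((z + 1).choose (j + 1) : ℝ) * p ^ (j + 1) * (1 - p) ^ (z + 1 - (j + 1))
      = p * ((z.choose j : ℝ) * p ^ j * (1 - p) ^ (z - j))
        + (1 - p) * ((z.choose (j + 1) : ℝ) * p ^ (j + 1) * (1 - p) ^ (z - (j + 1))) := by
    intro j
    rw [Nat.succ_sub_succ, Nat.choose_succ_succ']
    push_cast
    by_cases hjz : j + 1 ≤ z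
    · rw [show z - j = (z - (j + 1)) + 1 by omega]
      ring
    · have h0 : z.choose (j + 1) = 0 := Nat.choose_eq_zero_of_lt (by omega)
      rw [h0, show z - j = 0 from by omega, show z - (j + 1) = 0 from by omega]
      push_cast; ring
  have e2 : (∑ j ∈ Finset.range (k + 1 + 1), ((z.choose j : ℝ) * p ^ j * (1 - p) ^ (z - j)))
      = (∑ j ∈ Finset.range (k + 1), ((z.choose (j + 1) : ℝ) * p ^ (j + 1) * (1 - p) ^ (z - (j + 1)))) + (1 - p) ^ z := by
    rw [Finset.sum_range_succ']
    simp only [Nat.choose_zero_right, Nat.cast_one, pow_zero, Nat.sub_zero, one_mul, mul_one]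
  rw [binomCDF, binomCDF, binomCDF, Finset.sum_range_succ',
    Finset.sum_congr rfl fun j _ => e1 j, Finset.sum_add_distrib,
    ← Finset.mul_sum, ← Finset.mul_sum, e2]
  simp only [Nat.choose_zero_right, Nat.cast_one, pow_zero, Nat.sub_zero, one_mul, mul_one]
  ring

lemma binomCDF_succ_le (hp : 0 ≤ p) (hp1 : p ≤ 1) (z k : ℕ) :
    binomCDF (z + 1) k p ≤ binomCDF z k p := by
  have h1 : (0:ℝ) ≤ 1 - p := by linarith
  cases k with
  | zero =>
    rw [binomCDF_zero, binomCDF_zero]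
    exact pow_le_pow_of_le_one h1 (by linarith) (by omega)
  | succ k =>
    rw [binomCDF_succ]
    have h2 : binomCDF z k p ≤ binomCDF z (k + 1) p :=
      binomCDF_mono_k hp hp1 z (by omega)
    nlinarith [binomCDF_nonneg hp hp1 z (k + 1), binomCDF_nonneg hp hp1 z k]

lemma binomCDF_anti (hp : 0 ≤ p) (hp1 : p ≤ 1) (k : ℕ) {z z' : ℕ} (h : z ≤ z') :
    binomCDF z' k p ≤ binomCDF z k p := by
  induction z' with
  | zero => simp_all
  | succ n ih =>
    rcases Nat.eq_or_lt_of_le h with h' | h'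
    · exact le_of_eq (by rw [h'])
    · exact le_trans (binomCDF_succ_le hp hp1 n k) (ih (by omega))

theorem hFun_bounds (l : ℝ) (hl0 : 0 < l) (hl1 : l < 1)
    (k N : ℕ) (hN : k + 1 ≤ N) :
    hFun k N l (N + 1) = binomCDF N k (1 - l) ∧
    ∀ z : ℕ, z ≤ N + 1 →
      binomCDF N k (1 - l) ≤ hFun k N l z ∧ hFun k N l z ≤ 1 := by
  set p : ℝ := 1 - l with hpdef
  have hp : 0 ≤ p := by simp [hpdef]; linarith
  have hp1 : p ≤ 1 := by simp [hpdef]; linarith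
  have hN1 : (0:ℝ) < (N:ℝ) + 1 := by positivity
  have heq : hFun k N l (N + 1) = binomCDF N k p := by
    rw [hFun, if_neg (by omega)]
    push_cast
    rw [show ((N:ℝ) - (↑N + 1) + 1) = 0 by ring, ← hpdef]
    field_simp
    ring
  refine ⟨heq, fun z hz => ?_⟩
  by_cases hzk : z ≤ k
  · rw [hFun, if_pos hzk]
    exact ⟨binomCDF_le_one hp hp1 N k, le_refl 1⟩
  · rcases Nat.eq_or_lt_of_le hz with hzN | hzN
    · rw [hzN, heq]
      exact ⟨le_refl _, binomCDF_le_one hp hp1 N k⟩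
    · have hzN' : z ≤ N := by omega
      rw [hFun, if_neg hzk]
      have hA : (1:ℝ) ≤ (N:ℝ) - z + 1 := by
        have : (z:ℝ) ≤ N := by exact_mod_cast hzN'
        linarith
      have hBz : binomCDF N k p ≤ binomCDF z k p := binomCDF_anti hp hp1 k hzN'
      have hBz1 : binomCDF N k p ≤ binomCDF (z - 1) k p :=
        binomCDF_anti hp hp1 k (by omega)
      have hBz_le : binomCDF z k p ≤ 1 := binomCDF_le_one hp hp1 z k
      have hBz1_le : binomCDF (z - 1) k p ≤ 1 := binomCDF_le_one hp hp1 (z - 1) k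
      have hzpos : (0:ℝ) ≤ (z:ℝ) := by positivity
      constructor
      · rw [le_div_iff₀ hN1]
        nlinarith
      · rw [div_le_one hN1]
        nlinarith
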